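/- Let ρ be a density matrix and let {F_f^α}_{α ∈ A} and {F_{f'}^α}_{α ∈ A} be POVMs acting on disjoint tensor factors, such that for all α ∈ A, Tr((F_f^α ⊗ F_{f'}^α) ρ) ≥ (1−δ) Tr(F_f^α ρ) and Tr((F_f^α ⊗ F_{f'}^α) ρ) ≥ (1−δ) Tr(F_{f'}^α ρ). Then for all α, |Tr(F_f^α ρ) − Tr(F_{f'}^α ρ)| ≤ δ. -/

import Mathlib

open scoped Kronecker ComplexOrder
open Matrix

lemma kron_conjTranspose {m n p q : Type*} (A : Matrix m n ℂ) (B : Matrix p q ℂ) :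
    (A ⊗ₖ B)ᴴ = Aᴴ ⊗ₖ Bᴴ := by
  ext i j
  simp [conjTranspose_apply, kroneckerMap_apply, mul_comm]

open scoped MatrixOrder in
lemma psd_kron {m n : Type*} [Fintype m] [Fintype n] [DecidableEq m] [DecidableEq n]
    {A : Matrix m m ℂ} {B : Matrix n n ℂ} (hA : A.PosSemidef) (hB : B.PosSemidef) :
    (A ⊗ₖ B).PosSemidef := by
  have h : A ⊗ₖ B = (CFC.sqrt A ⊗ₖ CFC.sqrt B)ᴴ * (CFC.sqrt A ⊗ₖ CFC.sqrt B) := by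
    rw [kron_conjTranspose, (CFC.sqrt_nonneg A).posSemidef.isHermitian.eq, (CFC.sqrt_nonneg B).posSemidef.isHermitian.eq,
      ← mul_kronecker_mul, CFC.sqrt_mul_sqrt_self A hA.nonneg, CFC.sqrt_mul_sqrt_self B hB.nonneg]
  rw [h]
  exact posSemidef_conjTranspose_mul_self _

lemma psd_trace_re_nonneg {k : Type*} [Fintype k] [DecidableEq k] {M : Matrix k k ℂ} (hM : M.PosSemidef) :
    0 ≤ M.trace.re := by
  have : ∀ i, 0 ≤ (M i i).re := fun i => by
    have := hM.re_dotProduct_nonneg (Pi.single i 1)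
    simpa [dotProduct, Pi.single_apply] using this
  simpa [Matrix.trace, Matrix.diag, Complex.re_sum] using Finset.sum_nonneg fun i _ => this i

open scoped MatrixOrder in
lemma tr_re_nonneg {k : Type*} [Fintype k] [DecidableEq k] {M ρ : Matrix k k ℂ}
    (hM : M.PosSemidef) (hρ : ρ.PosSemidef) : 0 ≤ ((M * ρ).trace).re := by
  have h1 : (M * ρ).trace = ((CFC.sqrt M)ᴴ * ρ * CFC.sqrt M).trace := by
    rw [(CFC.sqrt_nonneg M).posSemidef.isHermitian.eq]
    calc (M * ρ).trace = (ρ * M).trace := trace_mul_comm _ _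
      _ = ((ρ * CFC.sqrt M) * CFC.sqrt M).trace := by rw [mul_assoc, CFC.sqrt_mul_sqrt_self M hM.nonneg]
      _ = (CFC.sqrt M * (ρ * CFC.sqrt M)).trace := trace_mul_comm _ _
      _ = (CFC.sqrt M * ρ * CFC.sqrt M).trace := by rw [mul_assoc]
  rw [h1]
  exact psd_trace_re_nonneg (hρ.conjTranspose_mul_mul_same _)

lemma psd_sum {k A : Type*} [Fintype k] (s : Finset A) (f : A → Matrix k k ℂ)
    (h : ∀ i ∈ s, (f i).PosSemidef) : (∑ i ∈ s, f i).PosSemidef := by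
  classical
  induction s using Finset.induction with
  | empty => simpa using Matrix.PosSemidef.zero
  | insert _ _ hx ih =>
    rw [Finset.sum_insert hx]
    exact (h _ (Finset.mem_insert_self _ _)).add
      (ih fun i hi => h i (Finset.mem_insert_of_mem hi))

lemma sum_kron_left {m n A : Type*} [Fintype A] (f : A → Matrix m m ℂ) (B : Matrix n n ℂ) :
    (∑ β, f β) ⊗ₖ B = ∑ β, (f β ⊗ₖ B) := by
  ext i j
  simp [kroneckerMap_apply, Matrix.sum_apply, Finset.sum_mul]

lemma sum_kron_right {m n A : Type*} [Fintype A] (B : Matrix m m ℂ) (f : A → Matrix n n ℂ) :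
    B ⊗ₖ (∑ β, f β) = ∑ β, (B ⊗ₖ f β) := by
  ext i j
  simp [kroneckerMap_apply, Matrix.sum_apply, Finset.mul_sum]


/-- if the POVMs {F_f^α} and {F_{f'}^α} on disjoint tensor factors
δ-approximately record each other on the density matrix ρ, then their outcome
probabilities on ρ differ by at most δ. -/
theorem mutual_records_close_probabilities
    {m n A : Type*} [Fintype m] [Fintype n] [Fintype A]
    [DecidableEq m] [DecidableEq n]
    (ρ : Matrix (m × n) (m × n) ℂ) (hρ : ρ.PosSemidef) (hρtr : ρ.trace = 1)
    (F : A → Matrix m m ℂ) (F' : A → Matrix n n ℂ)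
    (hF : ∀ α, (F α).PosSemidef) (hFsum : ∑ α, F α = 1)
    (hF' : ∀ α, (F' α).PosSemidef) (hF'sum : ∑ α, F' α = 1)
    (δ : ℝ) (hδ0 : 0 ≤ δ) (hδ1 : δ ≤ 1)
    (hrec : ∀ α, ((F α ⊗ₖ F' α) * ρ).trace.re
        ≥ (1 - δ) * ((F α ⊗ₖ (1 : Matrix n n ℂ)) * ρ).trace.re)
    (hrec' : ∀ α, ((F α ⊗ₖ F' α) * ρ).trace.re
        ≥ (1 - δ) * (((1 : Matrix m m ℂ) ⊗ₖ F' α) * ρ).trace.re) :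
    ∀ α, |((F α ⊗ₖ (1 : Matrix n n ℂ)) * ρ).trace.re
          - (((1 : Matrix m m ℂ) ⊗ₖ F' α) * ρ).trace.re| ≤ δ := by
  classical
  intro α
  set p := ((F α ⊗ₖ (1 : Matrix n n ℂ)) * ρ).trace.re with hp
  set q := (((1 : Matrix m m ℂ) ⊗ₖ F' α) * ρ).trace.re with hq
  set r := ((F α ⊗ₖ F' α) * ρ).trace.re with hr
  -- 1 - F α is PSD
  have hFc : (1 - F α).PosSemidef := by
    have : (1 : Matrix m m ℂ) - F α = ∑ β ∈ Finset.univ.erase α, F β := by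
      rw [← hFsum, sub_eq_iff_eq_add, Finset.sum_erase_add _ _ (Finset.mem_univ α)]
    rw [this]
    exact psd_sum _ _ fun β _ => hF β
  have hF'c : (1 - F' α).PosSemidef := by
    have : (1 : Matrix n n ℂ) - F' α = ∑ β ∈ Finset.univ.erase α, F' β := by
      rw [← hF'sum, sub_eq_iff_eq_add, Finset.sum_erase_add _ _ (Finset.mem_univ α)]
    rw [this]
    exact psd_sum _ _ fun β _ => hF' β
  -- r ≤ p
  have hrp : r ≤ p := by
    have hpsd : ((F α ⊗ₖ (1 - F' α)) * ρ).PosSemidef → True := fun _ => trivial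
    have h0 : 0 ≤ (((F α ⊗ₖ (1 - F' α)) : Matrix (m × n) (m × n) ℂ) * ρ).trace.re :=
      tr_re_nonneg (psd_kron (hF α) hF'c) hρ
    have heq : (F α ⊗ₖ (1 - F' α) : Matrix (m × n) (m × n) ℂ)
        = F α ⊗ₖ (1 : Matrix n n ℂ) - F α ⊗ₖ F' α := by
      ext i j; simp [kroneckerMap_apply, mul_sub]
    rw [heq, sub_mul, trace_sub, Complex.sub_re] at h0
    linarith [h0]
  have hrq : r ≤ q := by
    have h0 : 0 ≤ ((((1 - F α) ⊗ₖ F' α) : Matrix (m × n) (m × n) ℂ) * ρ).trace.re :=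
      tr_re_nonneg (psd_kron hFc (hF' α)) hρ
    have heq : ((1 - F α) ⊗ₖ F' α : Matrix (m × n) (m × n) ℂ)
        = (1 : Matrix m m ℂ) ⊗ₖ F' α - F α ⊗ₖ F' α := by
      ext i j; simp [kroneckerMap_apply, sub_mul]
    rw [heq, sub_mul, trace_sub, Complex.sub_re] at h0
    linarith [h0]
  -- p ≤ 1 and q ≤ 1, p,q ≥ 0
  have hp0 : 0 ≤ p := tr_re_nonneg (psd_kron (hF α) Matrix.PosSemidef.one) hρ
  have hq0 : 0 ≤ q := tr_re_nonneg (psd_kron Matrix.PosSemidef.one (hF' α)) hρ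
  have hsum1 : ∑ β, ((F β ⊗ₖ (1 : Matrix n n ℂ)) * ρ).trace.re = 1 := by
    have : ∑ β, ((F β ⊗ₖ (1 : Matrix n n ℂ)) * ρ) = ρ := by
      rw [← Finset.sum_mul, ← sum_kron_left, hFsum, one_kronecker_one, one_mul]
    calc ∑ β, ((F β ⊗ₖ (1 : Matrix n n ℂ)) * ρ).trace.re
        = (∑ β, ((F β ⊗ₖ (1 : Matrix n n ℂ)) * ρ)).trace.re := by
          rw [trace_sum, Complex.re_sum]
      _ = 1 := by rw [this, hρtr, Complex.one_re]
  have hsum2 : ∑ β, (((1 : Matrix m m ℂ) ⊗ₖ F' β) * ρ).trace.re = 1 := by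
    have : ∑ β, (((1 : Matrix m m ℂ) ⊗ₖ F' β) * ρ) = ρ := by
      rw [← Finset.sum_mul, ← sum_kron_right, hF'sum, one_kronecker_one, one_mul]
    calc ∑ β, (((1 : Matrix m m ℂ) ⊗ₖ F' β) * ρ).trace.re
        = (∑ β, (((1 : Matrix m m ℂ) ⊗ₖ F' β) * ρ)).trace.re := by
          rw [trace_sum, Complex.re_sum]
      _ = 1 := by rw [this, hρtr, Complex.one_re]
  have hp1 : p ≤ 1 := by
    rw [← hsum1]
    exact Finset.single_le_sum
      (fun β _ => tr_re_nonneg (psd_kron (hF β) Matrix.PosSemidef.one) hρ) (Finset.mem_univ α)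
  have hq1 : q ≤ 1 := by
    rw [← hsum2]
    exact Finset.single_le_sum
      (fun β _ => tr_re_nonneg (psd_kron Matrix.PosSemidef.one (hF' β)) hρ) (Finset.mem_univ α)
  have h1 := hrec α
  have h2 := hrec' α
  rw [abs_sub_le_iff]
  constructor <;> nlinarith [mul_nonneg hδ0 hp0, mul_nonneg hδ0 hq0]
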